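/- Let P and P~ be ergodic row-stochastic n×n Markov transition matrices with stationary distributions π and π~ respectively (π^T P = π^T, π~^T P~ = π~^T). Suppose the eigenvalues of P are real and can be ordered 1 = λ_1 > λ_2 ≥ ... ≥ λ_n, with λ_i < 1 for all i ≥ 2. Then ‖π − π~‖_1 ≤ (Σ_{i=2}^n 1/(1 − λ_i)) · ‖P − P~‖_∞, where ‖A‖_∞ = max_i Σ_j |A(i,j)| is the maximum absolute row sum. -/

import Mathlib

open scoped BigOperators
open Matrix

noncomputable section

namespace MJ

/-- Euclidean (ℓ2) norm of a finite vector. -/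
def l2 {k : ℕ} (v : Fin k → ℝ) : ℝ := Real.sqrt (∑ j, v j ^ 2)

/-- ℓ1 norm of a finite vector. -/
def l1 {k : ℕ} (v : Fin k → ℝ) : ℝ := ∑ i, |v i|

/-- Maximum absolute row sum (matrix ∞-norm). -/
def rowSumNorm {m k : ℕ} (A : Matrix (Fin m) (Fin k) ℝ) : ℝ := ⨆ i, ∑ j, |A i j|

/-- Frobenius norm. -/
def frob {m k : ℕ} (A : Matrix (Fin m) (Fin k) ℝ) : ℝ := Real.sqrt (∑ i, ∑ j, A i j ^ 2)

/-- Spectral norm (ℓ2 operator norm). -/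
def spec {m k : ℕ} (A : Matrix (Fin m) (Fin k) ℝ) : ℝ :=
  sSup {c : ℝ | ∃ x : Fin k → ℝ, l2 x ≤ 1 ∧ c = l2 (A.mulVec x)}

/-- `i`-th largest singular value (1-indexed), via Courant–Fischer max-min. -/
def singVal {m k : ℕ} (A : Matrix (Fin m) (Fin k) ℝ) (i : ℕ) : ℝ :=
  sSup {c : ℝ | ∃ V : Submodule ℝ (Fin k → ℝ), Module.finrank ℝ V = i ∧
    ∀ x ∈ V, c * l2 x ≤ l2 (A.mulVec x)}

/-- Row-stochastic matrix. -/
def RowStochastic {k : ℕ} (P : Matrix (Fin k) (Fin k) ℝ) : Prop :=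
  (∀ i j, 0 ≤ P i j) ∧ ∀ i, ∑ j, P i j = 1

/-- Probability vector. -/
def IsProbVec {k : ℕ} (v : Fin k → ℝ) : Prop := (∀ i, 0 ≤ v i) ∧ ∑ i, v i = 1

/-- Stationary distribution: a probability vector with πᵀ P = πᵀ. -/
def IsStationary {k : ℕ} (P : Matrix (Fin k) (Fin k) ℝ) (piv : Fin k → ℝ) : Prop :=
  IsProbVec piv ∧ ∀ j, ∑ i, piv i * P i j = piv j

/-- Ergodicity (irreducible + aperiodic ⟺ primitive for finite chains). -/
def Ergodic' {k : ℕ} (P : Matrix (Fin k) (Fin k) ℝ) : Prop :=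
  ∃ t : ℕ, ∀ i j, 0 < (P ^ t) i j

/-- ε-mixing time: τ(ε) = min{t : max_i (1/2)‖(P^t)(i,:) − π‖₁ ≤ ε}. -/
def mixingTime {k : ℕ} (P : Matrix (Fin k) (Fin k) ℝ) (piv : Fin k → ℝ) (ε : ℝ) : ℕ :=
  sInf {t : ℕ | ∀ i, (1/2) * ∑ j, |(P ^ t) i j - piv j| ≤ ε}

/-- Full SVD decomposition predicate: A = U S Vᵀ with U, V orthogonal and S diagonal
with nonnegative entries arranged in descending order. -/
def IsSVD {m k : ℕ} (A : Matrix (Fin m) (Fin k) ℝ) (U : Matrix (Fin m) (Fin m) ℝ)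
    (S : Matrix (Fin m) (Fin k) ℝ) (V : Matrix (Fin k) (Fin k) ℝ) : Prop :=
  Uᵀ * U = 1 ∧ Vᵀ * V = 1 ∧ A = U * S * Vᵀ ∧
  (∀ (i : Fin m) (j : Fin k), (i : ℕ) ≠ (j : ℕ) → S i j = 0) ∧
  (∀ i j, 0 ≤ S i j) ∧
  (∀ (a b : ℕ) (ham : a < m) (hak : a < k) (hbm : b < m) (hbk : b < k),
    a ≤ b → S ⟨b, hbm⟩ ⟨b, hbk⟩ ≤ S ⟨a, ham⟩ ⟨a, hak⟩)

/-- `Ur` consists of the first `r` left singular vectors of `A`. -/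
def IsLeftSingTrunc {m k : ℕ} (A : Matrix (Fin m) (Fin k) ℝ) (r : ℕ)
    (Ur : Matrix (Fin m) (Fin r) ℝ) : Prop :=
  ∃ U S V, IsSVD A U S V ∧ ∃ h : r ≤ m, ∀ (i : Fin m) (j : Fin r),
    Ur i j = U i ⟨(j : ℕ), lt_of_lt_of_le j.isLt h⟩

/-- `Vr` consists of the first `r` right singular vectors of `A`. -/
def IsRightSingTrunc {m k : ℕ} (A : Matrix (Fin m) (Fin k) ℝ) (r : ℕ)
    (Vr : Matrix (Fin k) (Fin r) ℝ) : Prop :=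
  IsLeftSingTrunc Aᵀ r Vr

/-- The matrix (I − EEᵀ)(FFᵀ), whose spectral/Frobenius norm is the sinΘ distance
between the column spaces of `E` and `F` (for `E`, `F` with orthonormal columns). -/
def sinThetaMat {k r : ℕ} (E F : Matrix (Fin k) (Fin r) ℝ) : Matrix (Fin k) (Fin k) ℝ :=
  (1 - E * Eᵀ) * (F * Fᵀ)

/-- Membership matrix: each row has exactly one entry 1 and all others 0. -/
def IsMembership {k r : ℕ} (M : Matrix (Fin k) (Fin r) ℝ) : Prop :=
  ∀ i, ∃ j, M i j = 1 ∧ ∀ j', j' ≠ j → M i j' = 0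

/-- A family of finsets forming a partition of `Fin k`. -/
def IsPartition {k r : ℕ} (Ω : Fin r → Finset (Fin k)) : Prop :=
  (∀ a b, a ≠ b → Disjoint (Ω a) (Ω b)) ∧ Finset.univ.biUnion Ω = Finset.univ

/-- `P` is aggregatable w.r.t. partition `Ω`: rows within the same cluster coincide. -/
def Aggregatable {k r : ℕ} (P : Matrix (Fin k) (Fin k) ℝ) (Ω : Fin r → Finset (Fin k)) : Prop :=
  ∀ s, ∀ i ∈ Ω s, ∀ j ∈ Ω s, ∀ c, P i c = P j c

/-- Misclustering rate: min over bijections of the relative misclustering counts. -/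
def MR {k r : ℕ} (Ω Ωh : Fin r → Finset (Fin k)) : ℝ :=
  ⨅ σ : Equiv.Perm (Fin r), ∑ j, (((Ω j) \ (Ωh (σ j))).card : ℝ) / ((Ω j).card : ℝ)

/-- k-means objective on the rows of `U`. -/
def kmeansObj {k r : ℕ} (U : Matrix (Fin k) (Fin r) ℝ) (Ωh : Fin r → Finset (Fin k))
    (c : Fin r → Fin r → ℝ) : ℝ :=
  ∑ s, ∑ i ∈ Ωh s, ∑ j, (U i j - c s j) ^ 2

/-- Optimal value of the k-means problem on the rows of `U`. -/
def kmeansOpt {k r : ℕ} (U : Matrix (Fin k) (Fin r) ℝ) : ℝ :=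
  sInf {v : ℝ | ∃ Ωh c, IsPartition Ωh ∧ v = kmeansObj U Ωh c}

/-- A (1+ε) approximate solution of the k-means problem on the rows of `U`. -/
def IsApproxKMeans {k r : ℕ} (U : Matrix (Fin k) (Fin r) ℝ) (ε : ℝ)
    (Ωh : Fin r → Finset (Fin k)) (c : Fin r → Fin r → ℝ) : Prop :=
  IsPartition Ωh ∧ kmeansObj U Ωh c ≤ (1 + ε) * kmeansOpt U

/-- Optimal value of the k-means problem in membership-matrix form. -/
def kmeansOptM {k r : ℕ} (U : Matrix (Fin k) (Fin r) ℝ) : ℝ :=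
  sInf {v : ℝ | ∃ (M : Matrix (Fin k) (Fin r) ℝ) (C : Matrix (Fin r) (Fin r) ℝ),
    IsMembership M ∧ v = frob (M * C - U) ^ 2}

/-- Number of t ∈ {1,…,N} with x_{t−1} = i. -/
def countState {k N : ℕ} (x : Fin (N+1) → Fin k) (i : Fin k) : ℕ :=
  (Finset.univ.filter fun t : Fin N => x t.castSucc = i).card

/-- Number of t ∈ {1,…,N} with x_{t−1} = i and x_t = j. -/
def countTrans {k N : ℕ} (x : Fin (N+1) → Fin k) (i j : Fin k) : ℕ :=
  (Finset.univ.filter fun t : Fin N => x t.castSucc = i ∧ x t.succ = j).card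

/-- Empirical state distribution. -/
def empPi {k N : ℕ} (x : Fin (N+1) → Fin k) (i : Fin k) : ℝ :=
  (countState x i : ℝ) / (N : ℝ)

/-- Empirical frequency matrix. -/
def empF {k N : ℕ} (x : Fin (N+1) → Fin k) : Matrix (Fin k) (Fin k) ℝ :=
  Matrix.of fun i j => (countTrans x i j : ℝ) / (N : ℝ)

/-- Empirical transition matrix (uniform row if a state never occurs). -/
def empMatrix {k N : ℕ} (x : Fin (N+1) → Fin k) : Matrix (Fin k) (Fin k) ℝ :=
  Matrix.of fun i j =>
    if countState x i = 0 then 1 / (k : ℝ)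
    else (countTrans x i j : ℝ) / (countState x i : ℝ)

/-- Probability weight of a finite Markov-chain path with initial distribution `pi0`. -/
def pathWeight {k : ℕ} (N : ℕ) (P : Matrix (Fin k) (Fin k) ℝ) (pi0 : Fin k → ℝ)
    (x : Fin (N+1) → Fin k) : ℝ :=
  pi0 (x 0) * ∏ t : Fin N, P (x t.castSucc) (x t.succ)

/-- Probability of an event over Markov-chain trajectories of length N+1. -/
def pathProb {k : ℕ} (N : ℕ) (P : Matrix (Fin k) (Fin k) ℝ) (pi0 : Fin k → ℝ)
    (E : Set ((Fin (N+1)) → Fin k)) : ℝ :=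
  ∑ x : Fin (N+1) → Fin k, E.indicator (pathWeight N P pi0) x

end MJ

open Polynomial

namespace MJX

lemma charpoly_eval {k : ℕ} (M : Matrix (Fin k) (Fin k) ℝ) (x : ℝ) :
    M.charpoly.eval x = (x • (1 : Matrix (Fin k) (Fin k) ℝ) - M).det := by
  rw [Matrix.charpoly, ← Polynomial.coe_evalRingHom, RingHom.map_det]
  congr 1
  ext i j
  by_cases h : i = j
  · subst h; simp [Matrix.charmatrix_apply_eq, Matrix.one_apply]
  · simp [Matrix.charmatrix_apply_ne _ _ _ h, Matrix.one_apply, h]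


lemma key1 {k : ℕ} (A : Matrix (Fin k) (Fin k) ℝ) (u v : Fin k → ℝ)
    (hAu : A *ᵥ u = 0) (hvu : v ⬝ᵥ u = 1) :
    X * (A + vecMulVec u v).charpoly = (X - 1) * A.charpoly := by
  apply Polynomial.eq_of_infinite_eval_eq
  have hfin : ({(0:ℝ)} ∪ {x | IsRoot A.charpoly x}).Finite :=
    (Set.finite_singleton 0).union (Polynomial.finite_setOf_isRoot A.charpoly_monic.ne_zero)
  apply Set.Infinite.mono (s := ({(0:ℝ)} ∪ {x | IsRoot A.charpoly x})ᶜ) _ hfin.infinite_compl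
  intro x hx
  simp only [Set.mem_compl_iff, Set.mem_union, Set.mem_singleton_iff, Set.mem_setOf_eq,
    not_or] at hx
  obtain ⟨hx0, hxr⟩ := hx
  have hdet : (x • (1 : Matrix (Fin k) (Fin k) ℝ) - A).det ≠ 0 := by
    rw [← charpoly_eval]; exact hxr
  set M : Matrix (Fin k) (Fin k) ℝ := x • 1 - A with hM
  have hMunit : IsUnit M.det := isUnit_iff_ne_zero.mpr hdet
  have hMu : M *ᵥ u = x • u := by
    rw [hM, Matrix.sub_mulVec, hAu, sub_zero, Matrix.smul_mulVec, Matrix.one_mulVec]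
  have hMinvu : M⁻¹ *ᵥ u = x⁻¹ • u := by
    have h1 : M⁻¹ *ᵥ (M *ᵥ u) = u := by
      rw [Matrix.mulVec_mulVec, Matrix.nonsing_inv_mul M hMunit, Matrix.one_mulVec]
    rw [hMu] at h1
    have h2 : M⁻¹ *ᵥ x • u = x • (M⁻¹ *ᵥ u) := by
      ext i
      simp [Matrix.mulVec, dotProduct, Finset.mul_sum]
      exact Finset.sum_congr rfl fun j _ => by ring
    rw [h2] at h1
    have h3 : x⁻¹ • (x • (M⁻¹ *ᵥ u)) = x⁻¹ • u := by rw [h1]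
    rw [smul_smul, inv_mul_cancel₀ hx0, one_smul] at h3
    rw [h3]
  have hsplit : x • (1 : Matrix (Fin k) (Fin k) ℝ) - (A + vecMulVec u v)
      = M + replicateCol Unit (-u) * replicateRow Unit v := by
    rw [← Matrix.vecMulVec_eq Unit, hM]
    ext i j
    simp [Matrix.vecMulVec_apply, Matrix.sub_apply, Matrix.add_apply]
    ring
  simp only [Set.mem_setOf_eq, eval_mul, eval_sub, eval_X, eval_one, charpoly_eval, hsplit]
  rw [Matrix.det_add_replicateCol_mul_replicateRow hMunit]
  have : (1 + replicateRow Unit v * M⁻¹ * replicateCol Unit (-u)).det = 1 - x⁻¹ := by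
    rw [Matrix.det_unique]
    simp only [Matrix.add_apply, Matrix.one_apply_eq]
    have : (replicateRow Unit v * M⁻¹ * replicateCol Unit (-u)) default default = v ⬝ᵥ (M⁻¹ *ᵥ (-u)) := by
      simp [Matrix.mul_apply, Matrix.replicateRow_apply, Matrix.replicateCol_apply, Matrix.mulVec, dotProduct,
        Finset.mul_sum, Finset.sum_mul, mul_assoc]
      rw [Finset.sum_comm]
    rw [this, Matrix.mulVec_neg, hMinvu]
    rw [dotProduct_neg, dotProduct_smul, hvu]
    simp [sub_eq_add_neg]
  rw [this]
  field_simp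
  ring

lemma charpoly_one_sub {k : ℕ} (P : Matrix (Fin k) (Fin k) ℝ) (lam : Fin k → ℝ)
    (hchar : P.charpoly = ∏ i, (X - C (lam i))) :
    (1 - P).charpoly = ∏ i, (X - C (1 - lam i)) := by
  apply Polynomial.funext
  intro x
  rw [charpoly_eval]
  have h1 : x • (1 : Matrix (Fin k) (Fin k) ℝ) - (1 - P)
      = -((1 - x) • (1 : Matrix (Fin k) (Fin k) ℝ) - P) := by
    ext i j
    by_cases h : i = j <;> simp [Matrix.one_apply, h] <;> ring
  rw [h1, Matrix.det_neg, ← charpoly_eval, hchar]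
  simp only [eval_prod, eval_sub, eval_X, eval_C, eval_mul, eval_pow, eval_neg, eval_one]
  have h2 : ∀ i : Fin k, x - (1 - lam i) = (-1) * ((1 - x) - lam i) := fun i => by ring
  rw [Finset.prod_congr rfl (fun i _ => h2 i), Finset.prod_mul_distrib, Finset.prod_const]
  simp [Fintype.card_fin]


lemma trace_inv_eq {k : ℕ} (B : Matrix (Fin (k+1)) (Fin (k+1)) ℝ) (μ : Fin (k+1) → ℝ)
    (hB : B.charpoly = ∏ i, (X - C (μ i))) (hμ : ∀ i, μ i ≠ 0) :
    B.det = ∏ i, μ i ∧ Matrix.trace B⁻¹ = ∑ i, (μ i)⁻¹ := by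
  have hdet : B.det = ∏ i, μ i := by
    have h0 := charpoly_eval B 0
    rw [hB] at h0
    simp only [eval_prod, eval_sub, eval_X, eval_C, zero_sub, zero_smul, zero_sub,
      Matrix.det_neg, Fintype.card_fin] at h0
    have h2 : ∏ i : Fin (k+1), -μ i = (-1 : ℝ)^(k+1) * ∏ i, μ i := by
      rw [Finset.prod_congr rfl (fun i _ => (neg_one_mul (μ i)).symm), Finset.prod_mul_distrib,
        Finset.prod_const]
      simp
    rw [h2] at h0
    exact (mul_left_cancel₀ (pow_ne_zero _ (by norm_num : (-1:ℝ) ≠ 0)) h0).symm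
  refine ⟨hdet, ?_⟩
  have hdet_ne : B.det ≠ 0 := by
    rw [hdet]; exact Finset.prod_ne_zero_iff.mpr fun i _ => hμ i
  have hunit : IsUnit B.det := isUnit_iff_ne_zero.mpr hdet_ne
  have hcharinv : B⁻¹.charpoly = ∏ i, (X - C (μ i)⁻¹) := by
    apply Polynomial.eq_of_infinite_eval_eq
    apply Set.Infinite.mono (s := ({(0:ℝ)} : Set ℝ)ᶜ) _ (Set.finite_singleton 0).infinite_compl
    intro x hx
    have hx0 : x ≠ 0 := hx
    simp only [Set.mem_setOf_eq, charpoly_eval, eval_prod, eval_sub, eval_X, eval_C]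
    -- det B * det (x•1 − B⁻¹) = det (x•B − 1)
    have key : B.det * (x • (1 : Matrix (Fin (k+1)) (Fin (k+1)) ℝ) - B⁻¹).det
        = (x • B - 1).det := by
      rw [← Matrix.det_mul]
      congr 1
      rw [Matrix.mul_sub, Matrix.mul_smul, Matrix.mul_one, Matrix.mul_nonsing_inv B hunit]
    have hxB : (x • B - 1 : Matrix (Fin (k+1)) (Fin (k+1)) ℝ)
        = x • (B - x⁻¹ • (1 : Matrix (Fin (k+1)) (Fin (k+1)) ℝ)) := by
      rw [smul_sub, smul_smul, mul_inv_cancel₀ hx0, one_smul]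
    have hval : (x • B - 1 : Matrix (Fin (k+1)) (Fin (k+1)) ℝ).det
        = ∏ i, (x * μ i - 1) := by
      rw [hxB, Matrix.det_smul, Fintype.card_fin]
      have : (B - x⁻¹ • (1 : Matrix (Fin (k+1)) (Fin (k+1)) ℝ))
          = -(x⁻¹ • (1 : Matrix (Fin (k+1)) (Fin (k+1)) ℝ) - B) := (neg_sub _ _).symm
      rw [this, Matrix.det_neg, Fintype.card_fin, ← charpoly_eval, hB]
      simp only [eval_prod, eval_sub, eval_X, eval_C]
      rw [← mul_assoc, ← mul_pow]
      rw [show ((x * -1 : ℝ))^(k+1) = ∏ _i : Fin (k+1), (x * -1) from by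
        simp [Finset.prod_const]]
      rw [← Finset.prod_mul_distrib]
      exact Finset.prod_congr rfl (fun i _ => by field_simp; ring)
    have hrhs : B.det * ∏ i, (x - (μ i)⁻¹) = ∏ i, (x * μ i - 1) := by
      rw [hdet, ← Finset.prod_mul_distrib]
      exact Finset.prod_congr rfl fun i _ => by field_simp [hμ i]
    have := key.trans hval
    rw [← hrhs] at this
    exact mul_left_cancel₀ hdet_ne this
  rw [Matrix.trace_eq_neg_charpoly_coeff, hcharinv, Fintype.card_fin]
  have := Polynomial.prod_X_sub_C_coeff_card_pred (Finset.univ : Finset (Fin (k+1)))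
    (fun i => (μ i)⁻¹) (by simp)
  simp only [Finset.card_univ, Fintype.card_fin] at this
  rw [this, neg_neg]


end MJX


open MJX Polynomial in
theorem stmt0' {n : ℕ} (P Pt : Matrix (Fin (n+1)) (Fin (n+1)) ℝ)
    (piv pivt : Fin (n+1) → ℝ)
    (hPnn : ∀ i j, 0 ≤ P i j) (hProw : ∀ i, ∑ j, P i j = 1)
    (hPtnn : ∀ i j, 0 ≤ Pt i j) (hPtrow : ∀ i, ∑ j, Pt i j = 1)
    (hPe : ∃ t : ℕ, ∀ i j, 0 < (P ^ t) i j)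
    (hπnn : ∀ i, 0 ≤ piv i) (hπsum : ∑ i, piv i = 1)
    (hπstat : ∀ j, ∑ i, piv i * P i j = piv j)
    (hπtnn : ∀ i, 0 ≤ pivt i) (hπtsum : ∑ i, pivt i = 1)
    (hπtstat : ∀ j, ∑ i, pivt i * Pt i j = pivt j)
    (lam : Fin (n+1) → ℝ)
    (hchar : P.charpoly = ∏ i, (X - C (lam i)))
    (hlam0 : lam 0 = 1)
    (hlt : ∀ i : Fin (n+1), i ≠ 0 → lam i < 1) :
    ∑ i, |piv i - pivt i| ≤
      (∑ i ∈ Finset.univ.erase (0 : Fin (n+1)), 1 / (1 - lam i)) *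
        (⨆ i, ∑ j, |(P - Pt) i j|) := by
  classical
  set A : Matrix (Fin (n+1)) (Fin (n+1)) ℝ := 1 - P with hA
  set Bm : Matrix (Fin (n+1)) (Fin (n+1)) ℝ :=
    A + vecMulVec (fun _ => 1) piv with hBm
  -- row sums of A are zero
  have hArow : ∀ i, ∑ j, A i j = 0 := by
    intro i
    simp only [hA, Matrix.sub_apply, Matrix.one_apply, Finset.sum_sub_distrib]
    simp [hProw i]
  have hAu : A *ᵥ (fun _ => (1:ℝ)) = 0 := by
    ext i
    simp only [Matrix.mulVec, dotProduct, mul_one, Pi.zero_apply]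
    exact hArow i
  -- the eigenvalue vector of Bm
  set μ : Fin (n+1) → ℝ := fun i => if i = 0 then 1 else 1 - lam i with hμ
  have hμpos : ∀ i, 0 < μ i := by
    intro i
    by_cases h : i = 0
    · simp [hμ, h]
    · simp only [hμ, h, if_false]
      have := hlt i h; linarith
  have hμne : ∀ i, μ i ≠ 0 := fun i => (hμpos i).ne'
  -- characteristic polynomial of Bm
  have hcharB : Bm.charpoly = ∏ i, (X - C (μ i)) := by
    have hvu : piv ⬝ᵥ (fun _ => (1:ℝ)) = 1 := by
      simp [dotProduct, hπsum]
    have k1 := key1 A (fun _ => 1) piv hAu hvu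
    rw [show A = 1 - P from hA, charpoly_one_sub P lam hchar, ← hA] at k1
    have hsplit : (∏ i, (X - C (1 - lam i)) : ℝ[X])
        = X * ∏ i ∈ Finset.univ.erase 0, (X - C (1 - lam i)) := by
      rw [← Finset.mul_prod_erase Finset.univ _ (Finset.mem_univ 0), hlam0]
      simp
    have hsplit2 : (∏ i, (X - C (μ i)) : ℝ[X])
        = (X - 1) * ∏ i ∈ Finset.univ.erase 0, (X - C (1 - lam i)) := by
      rw [← Finset.mul_prod_erase Finset.univ _ (Finset.mem_univ 0)]
      have h0 : (X - C (μ 0) : ℝ[X]) = X - 1 := by simp [hμ]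
      rw [h0]
      congr 1
      refine Finset.prod_congr rfl fun i hi => ?_
      have : i ≠ 0 := (Finset.mem_erase.mp hi).1
      simp [hμ, this]
    rw [hsplit, ← hBm] at k1
    have k1' : X * Bm.charpoly
        = X * ((X - 1) * ∏ i ∈ Finset.univ.erase 0, (X - C (1 - lam i))) := by
      rw [k1]; ring
    have := mul_left_cancel₀ (Polynomial.X_ne_zero : (X:ℝ[X]) ≠ 0) k1'
    rw [this, hsplit2]
  obtain ⟨hdetB, htraceInv⟩ := trace_inv_eq Bm μ hcharB hμne
  have hdet_ne : Bm.det ≠ 0 := by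
    rw [hdetB]; exact Finset.prod_ne_zero_iff.mpr fun i _ => hμne i
  have hunit : IsUnit Bm.det := isUnit_iff_ne_zero.mpr hdet_ne
  set W : Matrix (Fin (n+1)) (Fin (n+1)) ℝ := Bm⁻¹ with hW
  have hBW : Bm * W = 1 := Matrix.mul_nonsing_inv Bm hunit
  have hWB : W * Bm = 1 := Matrix.nonsing_inv_mul Bm hunit
  -- row sums of W are 1
  have hBrow : ∀ i, ∑ j, Bm i j = 1 := by
    intro i
    simp only [hBm, Matrix.add_apply, Matrix.vecMulVec_apply, one_mul,
      Finset.sum_add_distrib, hArow i, hπsum, zero_add]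
  have hWrow : ∀ i, ∑ j, W i j = 1 := by
    intro i
    have h1 : Bm *ᵥ (fun _ => (1:ℝ)) = fun _ => 1 := by
      ext i
      simp only [Matrix.mulVec, dotProduct, mul_one]
      exact hBrow i
    have h2 : W *ᵥ (fun _ => (1:ℝ)) = fun _ => 1 := by
      calc W *ᵥ (fun _ => (1:ℝ)) = W *ᵥ (Bm *ᵥ (fun _ => 1)) := by rw [h1]
        _ = (W * Bm) *ᵥ (fun _ => 1) := by rw [Matrix.mulVec_mulVec]
        _ = fun _ => 1 := by rw [hWB, Matrix.one_mulVec]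
    have := congrFun h2 i
    simpa [Matrix.mulVec, dotProduct] using this
  -- piv is a left fixed vector of W
  have hπB : piv ᵥ* Bm = piv := by
    ext j
    simp only [Matrix.vecMul, dotProduct, hBm, Matrix.add_apply,
      Matrix.vecMulVec_apply, one_mul, hA, Matrix.sub_apply, Matrix.one_apply]
    have : ∀ i, piv i * ((if i = j then (1:ℝ) else 0) - P i j + piv j)
        = (if i = j then piv i else 0) - piv i * P i j + piv i * piv j := by
      intro i; by_cases h : i = j <;> simp [h] <;> ring
    rw [Finset.sum_congr rfl fun i _ => this i]
    simp only [Finset.sum_add_distrib, Finset.sum_sub_distrib, Finset.sum_ite_eq',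
      Finset.mem_univ, if_true, hπstat j, ← Finset.sum_mul, hπsum, one_mul]
    ring
  have hπW : piv ᵥ* W = piv := by
    calc piv ᵥ* W = (piv ᵥ* Bm) ᵥ* W := by rw [hπB]
      _ = piv ᵥ* (Bm * W) := by rw [Matrix.vecMul_vecMul]
      _ = piv := by rw [hBW, Matrix.vecMul_one]
  -- the key entrywise identity  W = P * W + (I - 1 pivᵀ)
  have hAW : ∀ i j, W i j = (∑ c, P i c * W c j) + ((if i = j then (1:ℝ) else 0) - piv j) := by
    intro i j
    have h1 : (Bm * W) i j = (if i = j then (1:ℝ) else 0) := by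
      rw [hBW]; simp [Matrix.one_apply]
    rw [Matrix.mul_apply] at h1
    have h2 : ∀ c, Bm i c * W c j = (W c j) * (if i = c then (1:ℝ) else 0)
        - P i c * W c j + piv c * W c j := by
      intro c
      simp only [hBm, Matrix.add_apply, Matrix.vecMulVec_apply, one_mul, hA,
        Matrix.sub_apply, Matrix.one_apply]
      ring
    rw [Finset.sum_congr rfl fun c _ => h2 c] at h1
    have h3 : ∑ c, piv c * W c j = piv j := by
      have := congrFun hπW j
      simpa [Matrix.vecMul, dotProduct] using this
    simp only [Finset.sum_add_distrib, Finset.sum_sub_distrib, h3] at h1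
    have h4 : ∑ c, W c j * (if i = c then (1:ℝ) else 0) = W i j := by
      simp [Finset.sum_ite_eq]
    rw [h4] at h1
    linarith [h1]
  -- positivity of piv
  have hstatpow : ∀ t : ℕ, ∀ j, ∑ i, piv i * (P ^ t) i j = piv j := by
    intro t
    induction t with
    | zero => intro j; simp [Matrix.one_apply, Finset.sum_ite_eq']
    | succ t ih =>
      intro j
      rw [pow_succ]
      have e1 : ∀ i, piv i * (P ^ t * P) i j = ∑ c, (piv i * (P ^ t) i c) * P c j := by
        intro i
        rw [Matrix.mul_apply, Finset.mul_sum]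
        exact Finset.sum_congr rfl fun c _ => by ring
      rw [Finset.sum_congr rfl fun i _ => e1 i, Finset.sum_comm]
      have e2 : ∀ c, ∑ i, (piv i * (P ^ t) i c) * P c j = piv c * P c j := by
        intro c; rw [← Finset.sum_mul, ih c]
      rw [Finset.sum_congr rfl fun c _ => e2 c, hπstat j]
  have hpos : ∀ j, 0 < piv j := by
    intro j
    obtain ⟨t, ht⟩ := hPe
    obtain ⟨i0, hi0⟩ : ∃ i, 0 < piv i := by
      by_contra h
      push_neg at h
      have : ∑ i, piv i = 0 := Finset.sum_eq_zero fun i _ => le_antisymm (h i) (hπnn i)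
      rw [hπsum] at this; norm_num at this
    calc (0:ℝ) < piv i0 * (P ^ t) i0 j := mul_pos hi0 (ht i0 j)
      _ ≤ ∑ i, piv i * (P ^ t) i j :=
        Finset.single_le_sum (fun i _ => mul_nonneg (hπnn i) (ht i j).le) (Finset.mem_univ i0)
      _ = piv j := hstatpow t j
  -- diagonal dominance of W columns
  have hdom : ∀ i j, W i j ≤ W j j := by
    intro i j
    obtain ⟨i', -, hi'⟩ := Finset.exists_max_image Finset.univ (fun i => W i j)
      ⟨i, Finset.mem_univ i⟩
    by_cases he : i' = j
    · exact he ▸ hi' i (Finset.mem_univ i)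
    · exfalso
      have h1 := hAW i' j
      have h2 : ∑ c, P i' c * W c j ≤ ∑ c, P i' c * W i' j :=
        Finset.sum_le_sum fun c _ =>
          mul_le_mul_of_nonneg_left (hi' c (Finset.mem_univ c)) (hPnn i' c)
      have h3 : ∑ c, P i' c * W i' j = W i' j := by
        rw [← Finset.sum_mul, hProw, one_mul]
      rw [if_neg he] at h1
      have := hpos j
      linarith
  -- the trace quantity
  set T : ℝ := ∑ i ∈ Finset.univ.erase (0 : Fin (n+1)), (1 - lam i)⁻¹ with hT
  have hT0 : 0 ≤ T :=
    Finset.sum_nonneg fun i hi => by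
      have h1 : (0:ℝ) < 1 - lam i := by
        have := hlt i (Finset.mem_erase.mp hi).1; linarith
      positivity
  have htraceW : ∑ j, W j j = 1 + T := by
    have h1 : Matrix.trace W = ∑ i, (μ i)⁻¹ := htraceInv
    have h2 : ∑ i, (μ i)⁻¹ = 1 + T := by
      rw [← Finset.add_sum_erase Finset.univ _ (Finset.mem_univ 0)]
      have h0 : (μ 0)⁻¹ = 1 := by simp [hμ]
      rw [h0, hT]
      congr 1
      refine Finset.sum_congr rfl fun i hi => ?_
      have : i ≠ 0 := (Finset.mem_erase.mp hi).1
      simp [hμ, this]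
    rw [← h2, ← h1]
    simp [Matrix.trace, Matrix.diag]
  -- column sums of (Wjj - Wij) over j equal T
  have hcol : ∀ i, ∑ j, (W j j - W i j) = T := by
    intro i
    rw [Finset.sum_sub_distrib, htraceW, hWrow i]
    ring
  -- the perturbation vector
  set f : Fin (n+1) → ℝ := fun j => ∑ i, pivt i * (P i j - Pt i j) with hf
  have hfB : (fun i => piv i - pivt i) ᵥ* Bm = f := by
    ext j
    simp only [Matrix.vecMul, dotProduct, hBm, Matrix.add_apply,
      Matrix.vecMulVec_apply, one_mul, hA, Matrix.sub_apply, Matrix.one_apply]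
    have hexp : ∀ i, (piv i - pivt i) * ((if i = j then (1:ℝ) else 0) - P i j + piv j)
        = ((if i = j then piv i - pivt i else 0))
          - (piv i * P i j - pivt i * P i j) + (piv i - pivt i) * piv j := by
      intro i; by_cases h : i = j <;> simp [h] <;> ring
    rw [Finset.sum_congr rfl fun i _ => hexp i]
    simp only [Finset.sum_add_distrib, Finset.sum_sub_distrib, Finset.sum_ite_eq',
      Finset.mem_univ, if_true, hπstat j, ← Finset.sum_mul, hπsum, hπtsum]
    rw [hf]
    simp only [Finset.sum_sub_distrib, hπtstat j]
    have : ∀ i, pivt i * (P i j - Pt i j) = pivt i * P i j - pivt i * Pt i j :=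
      fun i => by ring
    rw [Finset.sum_congr rfl fun i _ => this i, Finset.sum_sub_distrib, hπtstat j]
    ring
  have hd : ∀ j, piv j - pivt j = ∑ i, f i * W i j := by
    intro j
    have h1 : (fun i => piv i - pivt i) ᵥ* (Bm * W) = f ᵥ* W := by
      rw [← Matrix.vecMul_vecMul, hfB]
    rw [hBW, Matrix.vecMul_one] at h1
    have := congrFun h1 j
    simpa [Matrix.vecMul, dotProduct] using this
  have hfsum : ∑ i, f i = 0 := by
    rw [hf, Finset.sum_comm]
    refine Finset.sum_eq_zero fun i _ => ?_
    have e1 : ∑ j, pivt i * (P i j - Pt i j)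
        = pivt i * ((∑ j, P i j) - ∑ j, Pt i j) := by
      rw [← Finset.mul_sum, Finset.sum_sub_distrib]
    rw [e1, hProw i, hPtrow i]
    ring
  -- bound on the l1 norm of f
  set Rn : ℝ := ⨆ i, ∑ j, |(P - Pt) i j| with hRn
  have hRnrow : ∀ l, ∑ j, |(P - Pt) l j| ≤ Rn := by
    intro l
    rw [hRn]
    exact le_ciSup (f := fun i => ∑ j, |(P - Pt) i j|)
      (Set.Finite.bddAbove (Set.finite_range _)) l
  have hfabs : ∑ i, |f i| ≤ Rn := by
    have step1 : ∀ i, |f i| ≤ ∑ l, pivt l * |(P - Pt) l i| := by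
      intro i
      rw [hf]
      calc |∑ l, pivt l * (P l i - Pt l i)| ≤ ∑ l, |pivt l * (P l i - Pt l i)| :=
            Finset.abs_sum_le_sum_abs _ _
        _ = ∑ l, pivt l * |(P - Pt) l i| := Finset.sum_congr rfl fun l _ => by
            rw [abs_mul, abs_of_nonneg (hπtnn l), Matrix.sub_apply]
    calc ∑ i, |f i| ≤ ∑ i, ∑ l, pivt l * |(P - Pt) l i| :=
          Finset.sum_le_sum fun i _ => step1 i
      _ = ∑ l, pivt l * ∑ i, |(P - Pt) l i| := by
          rw [Finset.sum_comm]
          exact Finset.sum_congr rfl fun l _ => by rw [Finset.mul_sum]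
      _ ≤ ∑ l, pivt l * Rn :=
          Finset.sum_le_sum fun l _ => mul_le_mul_of_nonneg_left (hRnrow l) (hπtnn l)
      _ = Rn := by rw [← Finset.sum_mul, hπtsum, one_mul]
  -- main estimate
  have hmain : ∑ j, |piv j - pivt j| ≤ T * Rn := by
    have hstep : ∀ j, |piv j - pivt j| ≤ ∑ i, |f i| * (W j j - W i j) := by
      intro j
      rw [hd j]
      have e1 : ∑ i, f i * W i j = ∑ i, f i * (W i j - W j j) := by
        have e0 : ∀ i : Fin (n+1), f i * (W i j - W j j) = f i * W i j - f i * W j j :=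
          fun i => by ring
        have : ∑ i, f i * (W i j - W j j)
            = (∑ i, f i * W i j) - (∑ i, f i) * W j j := by
          rw [Finset.sum_congr rfl fun i _ => e0 i, Finset.sum_sub_distrib, ← Finset.sum_mul]
        rw [this, hfsum, zero_mul, sub_zero]
      rw [e1]
      calc |∑ i, f i * (W i j - W j j)| ≤ ∑ i, |f i * (W i j - W j j)| :=
            Finset.abs_sum_le_sum_abs _ _
        _ = ∑ i, |f i| * (W j j - W i j) := Finset.sum_congr rfl fun i _ => by
            rw [abs_mul, abs_of_nonpos (by linarith [hdom i j] : W i j - W j j ≤ 0)]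
            ring
    calc ∑ j, |piv j - pivt j| ≤ ∑ j, ∑ i, |f i| * (W j j - W i j) :=
          Finset.sum_le_sum fun j _ => hstep j
      _ = ∑ i, |f i| * ∑ j, (W j j - W i j) := by
          rw [Finset.sum_comm]
          exact Finset.sum_congr rfl fun i _ => by rw [Finset.mul_sum]
      _ = ∑ i, |f i| * T := Finset.sum_congr rfl fun i _ => by rw [hcol i]
      _ = T * ∑ i, |f i| := by rw [← Finset.sum_mul]; ring
      _ ≤ T * Rn := mul_le_mul_of_nonneg_left hfabs hT0
  have hTeq : (∑ i ∈ Finset.univ.erase (0 : Fin (n+1)), 1 / (1 - lam i)) = T := by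
    rw [hT]
    exact Finset.sum_congr rfl fun i _ => one_div _
  rw [hTeq]
  exact hmain


open MJ Polynomial in
/-- stationary distribution perturbation bound via eigenvalues. -/
theorem stmt0 {n : ℕ} (P Pt : Matrix (Fin (n+1)) (Fin (n+1)) ℝ)
    (piv pivt : Fin (n+1) → ℝ)
    (hP : RowStochastic P) (hPt : RowStochastic Pt)
    (hPe : Ergodic' P) (hPte : Ergodic' Pt)
    (hpiv : IsStationary P piv) (hpivt : IsStationary Pt pivt)
    (lam : Fin (n+1) → ℝ)
    (hchar : P.charpoly = ∏ i, (X - C (lam i)))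
    (hlam0 : lam 0 = 1)
    (hanti : Antitone lam)
    (hlt : ∀ i : Fin (n+1), i ≠ 0 → lam i < 1) :
    l1 (fun i => piv i - pivt i) ≤
      (∑ i ∈ Finset.univ.erase (0 : Fin (n+1)), 1 / (1 - lam i)) * rowSumNorm (P - Pt) := by
  obtain ⟨hPnn, hProw⟩ := hP
  obtain ⟨⟨hπnn, hπsum⟩, hπstat⟩ := hpiv
  obtain ⟨⟨hπtnn, hπtsum⟩, hπtstat⟩ := hpivt
  simpa [MJ.l1, MJ.rowSumNorm] using
    stmt0' P Pt piv pivt hPnn hProw hPt.1 hPt.2 hPe hπnn hπsum hπstat hπtnn hπtsum hπtstat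
      lam hchar hlam0 hlt
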